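/- Let f : [0,1] → [0,1] and let P, Q be probability measures on a finite set with TV(P,Q) ≤ δ, and let α ∈ (0,1]. Then |CVaR_α(f;P) − CVaR_α(f;Q)| ≤ δ/α, where CVaR_α(f;P) = inf_{η∈ℝ} ( α⁻¹ 𝔼_P[(f − η)₊] + η ). -/
import Mathlib

/-- TV bound: for `h : S → [0,1]`, `|∑ (P-Q) h| ≤ δ`. -/
lemma tv_pair_bound {S : Type*} [Fintype S]
    (P Q : S → ℝ) (δ : ℝ)
    (hTV : ∀ A : Finset S, |(∑ s ∈ A, P s) - (∑ s ∈ A, Q s)| ≤ δ)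
    (h : S → ℝ) (hh0 : ∀ s, 0 ≤ h s) (hh1 : ∀ s, h s ≤ 1) :
    |∑ s, (P s - Q s) * h s| ≤ δ := by
  classical
  set A : Finset S := Finset.univ.filter (fun s => Q s ≤ P s) with hA
  have hsplit : ∑ s, (P s - Q s) * h s
      = ∑ s ∈ A, (P s - Q s) * h s + ∑ s ∈ Aᶜ, (P s - Q s) * h s := by
    rw [Finset.sum_add_sum_compl]
  have hAmem : ∀ s ∈ A, Q s ≤ P s := by
    intro s hs; simpa [hA] using hs
  have hAcmem : ∀ s ∈ Aᶜ, P s ≤ Q s := by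
    intro s hs
    have : ¬ Q s ≤ P s := by simpa [hA] using hs
    linarith
  have hub : ∑ s, (P s - Q s) * h s ≤ δ := by
    rw [hsplit]
    have h1 : ∑ s ∈ A, (P s - Q s) * h s ≤ ∑ s ∈ A, (P s - Q s) := by
      apply Finset.sum_le_sum
      intro s hs
      have := hAmem s hs
      nlinarith [hh0 s, hh1 s]
    have h2 : ∑ s ∈ Aᶜ, (P s - Q s) * h s ≤ 0 := by
      apply Finset.sum_nonpos
      intro s hs
      have := hAcmem s hs
      nlinarith [hh0 s]
    have h3 : ∑ s ∈ A, (P s - Q s) ≤ δ := by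
      have := hTV A
      rw [Finset.sum_sub_distrib] at *
      exact le_trans (le_abs_self _) this
    linarith
  have hlb : -δ ≤ ∑ s, (P s - Q s) * h s := by
    rw [hsplit]
    have h1 : ∑ s ∈ Aᶜ, (P s - Q s) ≤ ∑ s ∈ Aᶜ, (P s - Q s) * h s := by
      apply Finset.sum_le_sum
      intro s hs
      have := hAcmem s hs
      nlinarith [hh0 s, hh1 s]
    have h2 : 0 ≤ ∑ s ∈ A, (P s - Q s) * h s := by
      apply Finset.sum_nonneg
      intro s hs
      have := hAmem s hs
      nlinarith [hh0 s]
    have h3 : -δ ≤ ∑ s ∈ Aᶜ, (P s - Q s) := by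
      have := hTV Aᶜ
      rw [Finset.sum_sub_distrib] at *
      exact neg_le_of_abs_le this
    linarith
  exact abs_le.mpr ⟨hlb, hub⟩

/-- CVaR stability in total variation: for `f : S → [0,1]` and probability vectors `P, Q`
with `TV(P,Q) ≤ δ`, the Rockafellar–Uryasev CVaR values differ by at most `δ/α`. -/
theorem stmt_18 {S : Type*} [Fintype S] [Nonempty S]
    (f : S → ℝ) (hf : ∀ s, f s ∈ Set.Icc (0 : ℝ) 1)
    (P Q : S → ℝ)
    (hPpos : ∀ s, 0 ≤ P s) (hPsum : (∑ s, P s) = 1)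
    (hQpos : ∀ s, 0 ≤ Q s) (hQsum : (∑ s, Q s) = 1)
    (δ : ℝ) (hδ : 0 ≤ δ)
    (hTV : ∀ A : Finset S, |(∑ s ∈ A, P s) - (∑ s ∈ A, Q s)| ≤ δ)
    (α : ℝ) (hα : 0 < α ∧ α ≤ 1) :
    |sInf {x : ℝ | ∃ η : ℝ, x = η + (1 / α) * ∑ s, P s * max (f s - η) 0}
      - sInf {x : ℝ | ∃ η : ℝ, x = η + (1 / α) * ∑ s, Q s * max (f s - η) 0}| ≤ δ / α := by
  obtain ⟨hα0, hα1⟩ := hα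
  set vP : ℝ → ℝ := fun η => η + (1 / α) * ∑ s, P s * max (f s - η) 0 with hvP
  set vQ : ℝ → ℝ := fun η => η + (1 / α) * ∑ s, Q s * max (f s - η) 0 with hvQ
  -- per-η comparison
  have key : ∀ η : ℝ, |vP η - vQ η| ≤ δ / α := by
    intro η
    have hdiff : vP η - vQ η = (1 / α) * ∑ s, (P s - Q s) * max (f s - η) 0 := by
      have e : ∑ s, (P s - Q s) * max (f s - η) 0
          = (∑ s, P s * max (f s - η) 0) - ∑ s, Q s * max (f s - η) 0 := by
        rw [← Finset.sum_sub_distrib]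
        exact Finset.sum_congr rfl (fun s _ => by ring)
      simp only [hvP, hvQ]
      rw [e]; ring
    -- shift by c = max (-η) 0
    set c : ℝ := max (-η) 0 with hc
    have hshift : ∑ s, (P s - Q s) * max (f s - η) 0
        = ∑ s, (P s - Q s) * (max (f s - η) 0 - c) := by
      rw [show (fun s => (P s - Q s) * (max (f s - η) 0 - c))
          = fun s => (P s - Q s) * max (f s - η) 0 - (P s - Q s) * c from by
            funext s; ring]
      rw [Finset.sum_sub_distrib]
      have : ∑ s, (P s - Q s) * c = (∑ s, P s - ∑ s, Q s) * c := by
        rw [← Finset.sum_sub_distrib, Finset.sum_mul]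
      rw [this, hPsum, hQsum]
      ring
    have hbd : |∑ s, (P s - Q s) * (max (f s - η) 0 - c)| ≤ δ := by
      apply tv_pair_bound P Q δ hTV
      · intro s
        rcases le_or_gt η 0 with hη | hη
        · have h1 : max (f s - η) 0 = f s - η := by
            have := (hf s).1; rw [max_eq_left]; linarith
          have h2 : c = -η := by rw [hc, max_eq_left]; linarith
          rw [h1, h2]
          have := (hf s).1; linarith
        · have h2 : c = 0 := by rw [hc, max_eq_right]; linarith
          rw [h2]
          simp [le_max_right]
      · intro s
        rcases le_or_gt η 0 with hη | hη
        · have h1 : max (f s - η) 0 = f s - η := by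
            have := (hf s).1; rw [max_eq_left]; linarith
          have h2 : c = -η := by rw [hc, max_eq_left]; linarith
          rw [h1, h2]
          have := (hf s).2; linarith
        · have h2 : c = 0 := by rw [hc, max_eq_right]; linarith
          rw [h2, sub_zero]
          have := (hf s).2
          apply max_le <;> linarith
    rw [hdiff, hshift, abs_mul, abs_of_nonneg (by positivity : (0:ℝ) ≤ 1/α)]
    rw [div_eq_mul_inv δ α, mul_comm δ α⁻¹, one_div]
    exact mul_le_mul_of_nonneg_left hbd (by positivity)
  -- the sets
  set SP : Set ℝ := {x : ℝ | ∃ η : ℝ, x = vP η} with hSP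
  set SQ : Set ℝ := {x : ℝ | ∃ η : ℝ, x = vQ η} with hSQ
  have hlbv : ∀ (R : S → ℝ), (∀ s, 0 ≤ R s) → (∑ s, R s) = 1 →
      ∀ η : ℝ, 0 ≤ η + (1 / α) * ∑ s, R s * max (f s - η) 0 := by
    intro R hR hRs η
    rcases le_or_gt η 0 with hη | hη
    · have hge : ∑ s, R s * max (f s - η) 0 ≥ ∑ s, R s * (0 - η) := by
        apply Finset.sum_le_sum
        intro s _
        apply mul_le_mul_of_nonneg_left _ (hR s)
        have := (hf s).1
        calc 0 - η ≤ f s - η := by linarith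
          _ ≤ max (f s - η) 0 := le_max_left _ _
      have hsum : ∑ s, R s * (0 - η) = -η := by
        rw [← Finset.sum_mul, hRs]; ring
      rw [hsum] at hge
      have h1 : (1:ℝ) ≤ 1/α := by
        rw [le_div_iff₀ hα0]; linarith
      nlinarith [hge]
    · have hge : 0 ≤ ∑ s, R s * max (f s - η) 0 := by
        apply Finset.sum_nonneg
        intro s _
        exact mul_nonneg (hR s) (le_max_right _ _)
      positivity
  have hbddP : BddBelow SP := ⟨0, by rintro x ⟨η, rfl⟩; exact hlbv P hPpos hPsum η⟩
  have hbddQ : BddBelow SQ := ⟨0, by rintro x ⟨η, rfl⟩; exact hlbv Q hQpos hQsum η⟩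
  have hneP : SP.Nonempty := ⟨vP 0, 0, rfl⟩
  have hneQ : SQ.Nonempty := ⟨vQ 0, 0, rfl⟩
  clear_value vP vQ SP SQ
  have h1 : sInf SP - δ / α ≤ sInf SQ := by
    apply le_csInf hneQ
    intro x hx
    rw [hSQ] at hx
    obtain ⟨η, rfl⟩ := hx
    have hle : sInf SP ≤ vP η := csInf_le hbddP (by rw [hSP]; exact ⟨η, rfl⟩)
    have hk := abs_le.mp (key η)
    linarith [hk.1, hk.2]
  have h2 : sInf SQ - δ / α ≤ sInf SP := by
    apply le_csInf hneP
    intro x hx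
    rw [hSP] at hx
    obtain ⟨η, rfl⟩ := hx
    have hle : sInf SQ ≤ vQ η := csInf_le hbddQ (by rw [hSQ]; exact ⟨η, rfl⟩)
    have hk := abs_le.mp (key η)
    linarith [hk.1, hk.2]
  exact abs_le.mpr ⟨by linarith, by linarith⟩
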